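/- Let s : Fin T → ℝ with |s_t| ≤ ε for all t, where 0 ≤ ε. Then the softmax weights a_p = exp(s_p)/Σ_t exp(s_t) satisfy |a_p − 1/T| ≤ (e^{2ε} − 1)/T for every p. -/
import Mathlib


/-- If all logits are bounded by `ε`, the softmax weights are within
`(e^{2ε} - 1)/T` of the uniform weight `1/T`. -/
theorem softmax_near_uniform (T : ℕ) (hT : 0 < T) (s : Fin T → ℝ)
    (ε : ℝ) (hε : 0 ≤ ε) (hs : ∀ t, |s t| ≤ ε) (p : Fin T) :
    |Real.exp (s p) / (∑ t, Real.exp (s t)) - 1 / (T : ℝ)| ≤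
      (Real.exp (2 * ε) - 1) / (T : ℝ) := by
  have hTpos : (0:ℝ) < T := by exact_mod_cast hT
  set S := ∑ t, Real.exp (s t) with hS
  have hbound : ∀ t : Fin T, Real.exp (-ε) ≤ Real.exp (s t) ∧ Real.exp (s t) ≤ Real.exp ε := by
    intro t
    have h := abs_le.mp (hs t)
    exact ⟨Real.exp_le_exp.mpr h.1, Real.exp_le_exp.mpr h.2⟩
  have hSlo : (T:ℝ) * Real.exp (-ε) ≤ S := by
    calc (T:ℝ) * Real.exp (-ε) = ∑ _t : Fin T, Real.exp (-ε) := by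
          simp [Finset.sum_const, mul_comm]
      _ ≤ S := Finset.sum_le_sum (fun t _ => (hbound t).1)
  have hShi : S ≤ (T:ℝ) * Real.exp ε := by
    calc S ≤ ∑ _t : Fin T, Real.exp ε := Finset.sum_le_sum (fun t _ => (hbound t).2)
      _ = (T:ℝ) * Real.exp ε := by simp [Finset.sum_const, mul_comm]
  have hSpos : 0 < S :=
    lt_of_lt_of_le (by positivity) hSlo
  have hup : Real.exp (s p) / S ≤ Real.exp (2*ε) / T := by
    have h1 : Real.exp (s p) / S ≤ Real.exp ε / ((T:ℝ) * Real.exp (-ε)) :=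
      div_le_div₀ (Real.exp_pos ε).le (hbound p).2 (by positivity) hSlo
    have he : Real.exp ε * Real.exp (-ε) = 1 := by rw [← Real.exp_add]; simp
    have h2 : Real.exp ε / ((T:ℝ) * Real.exp (-ε)) = Real.exp (2*ε) / T := by
      rw [div_eq_div_iff (by positivity) hTpos.ne', show (2*ε) = ε + ε by ring,
        Real.exp_add]
      linear_combination (-(Real.exp ε * (T:ℝ))) * he
    linarith
  have hlo : Real.exp (-(2*ε)) / T ≤ Real.exp (s p) / S := by
    have h1 : Real.exp (-ε) / ((T:ℝ) * Real.exp ε) ≤ Real.exp (s p) / S :=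
      div_le_div₀ (by positivity) (hbound p).1 hSpos hShi
    have he : Real.exp ε * Real.exp (-ε) = 1 := by rw [← Real.exp_add]; simp
    have h2 : Real.exp (-ε) / ((T:ℝ) * Real.exp ε) = Real.exp (-(2*ε)) / T := by
      rw [div_eq_div_iff (by positivity) hTpos.ne', show (-(2*ε)) = -ε + -ε by ring,
        Real.exp_add]
      linear_combination (-(Real.exp (-ε) * (T:ℝ))) * he
    linarith
  have hsum2 : 2 ≤ Real.exp (2*ε) + Real.exp (-(2*ε)) := by
    have := Real.add_one_le_exp (2*ε)
    have := Real.add_one_le_exp (-(2*ε))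
    linarith
  rw [abs_le]
  have hmid : (1 - Real.exp (2*ε))/(T:ℝ) ≤ (Real.exp (-(2*ε)) - 1)/(T:ℝ) :=
    (div_le_div_iff_of_pos_right hTpos).mpr (by linarith)
  constructor
  · have e1 : -((Real.exp (2*ε) - 1)/(T:ℝ)) = (1 - Real.exp (2*ε))/(T:ℝ) := by ring
    have e2 : (Real.exp (-(2*ε)) - 1)/(T:ℝ) = Real.exp (-(2*ε))/(T:ℝ) - 1/(T:ℝ) :=
      sub_div _ _ _
    linarith
  · have e3 : (Real.exp (2*ε) - 1)/(T:ℝ) = Real.exp (2*ε)/(T:ℝ) - 1/(T:ℝ) := sub_div _ _ _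
    linarith
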